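/- Let H, D, R, T_d > 0, ΔP_{L1} > 0, ΔP_s ≥ 0, T_s ≥ 0, and ΔP'_{L1} = ΔP_{L0} - ΔP_s·e^{(D/(2H))T_s} with ΔP_{L0} = ΔP_{L1} + ΔP_s. Assume ΔP'_{L1} > 0. Then t_n = (2H/D)·ln(T_d·D·ΔP'_{L1}/(2HR) + 1) is the unique positive stationary point of the post-shedding trajectory Δf(t) = (ΔP_{L1}/D + 2HR/(T_d D²))(e^{-(D/(2H))t} - 1) + (R/(T_d D))t + (ΔP_s/D)(1 - e^{(D/(2H))T_s})e^{-(D/(2H))t}, i.e., Δf'(t_n) = 0 and Δf'(t) ≠ 0 for all other t > 0. -/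

import Mathlib

theorem stmt_5 (H D P0 Ps P1 P1' R Td Ts : ℝ) (hH : 0 < H) (hD : 0 < D)
    (hR : 0 < R) (hTd : 0 < Td) (hP1 : 0 < P1) (hPs : 0 ≤ Ps) (hTs : 0 ≤ Ts)
    (hP0 : P0 = P1 + Ps)
    (hP1' : P1' = P0 - Ps * Real.exp ((D / (2 * H)) * Ts)) (hpos : 0 < P1')
    (Δf : ℝ → ℝ)
    (hΔf : ∀ t : ℝ, Δf t =
      (P1 / D + 2 * H * R / (Td * D ^ 2)) * (Real.exp (-(D / (2 * H)) * t) - 1)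
        + (R / (Td * D)) * t
        + (Ps / D) * (1 - Real.exp ((D / (2 * H)) * Ts)) * Real.exp (-(D / (2 * H)) * t))
    (tn : ℝ) (htn : tn = (2 * H / D) * Real.log (Td * D * P1' / (2 * H * R) + 1)) :
    0 < tn ∧ deriv Δf tn = 0 ∧
      ∀ t : ℝ, 0 < t → t ≠ tn → deriv Δf t ≠ 0 := by
  have hH2 : (0:ℝ) < 2 * H := by linarith
  set K := D / (2 * H) with hK
  have hKpos : 0 < K := div_pos hD hH2
  set A := P1 / D + 2 * H * R / (Td * D ^ 2) with hA
  set B := R / (Td * D) with hB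
  set C := (Ps / D) * (1 - Real.exp (K * Ts)) with hC
  have hfun : Δf = fun t => A * (Real.exp (-K * t) - 1) + B * t
      + C * Real.exp (-K * t) := funext hΔf
  -- derivative formula
  have hd : ∀ t : ℝ, HasDerivAt Δf (B - K * (A + C) * Real.exp (-K * t)) t := by
    intro t
    rw [hfun]
    have h1 : HasDerivAt (fun x : ℝ => Real.exp (-K * x)) (-K * Real.exp (-K * t)) t := by
      have hlin : HasDerivAt (fun x : ℝ => -K * x) (-K) t := by
        simpa using (hasDerivAt_id t).const_mul (-K)
      have h := (Real.hasDerivAt_exp (-K * t)).comp t hlin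
      rw [mul_comm] at h
      exact h
    have h2 : HasDerivAt (fun x : ℝ => A * (Real.exp (-K * x) - 1))
        (A * (-K * Real.exp (-K * t))) t := (h1.sub_const 1).const_mul A
    have h3 : HasDerivAt (fun x : ℝ => B * x) B t := by
      simpa using (hasDerivAt_id t).const_mul B
    have h4 : HasDerivAt (fun x : ℝ => C * Real.exp (-K * x))
        (C * (-K * Real.exp (-K * t))) t := h1.const_mul C
    have := (h2.add h3).add h4
    refine this.congr_deriv ?_
    ring
  have hderiv : ∀ t : ℝ, deriv Δf t = B - K * (A + C) * Real.exp (-K * t) :=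
    fun t => (hd t).deriv
  have hDne : D ≠ 0 := hD.ne'
  have hTdne : Td ≠ 0 := hTd.ne'
  have hHne : H ≠ 0 := hH.ne'
  have hRne : R ≠ 0 := hR.ne'
  have hM : K * (A + C) = B + P1' / (2 * H) := by
    rw [hP1', hP0, hA, hB, hC, hK]
    field_simp
    ring
  have hBpos : 0 < B := div_pos hR (mul_pos hTd hD)
  have hQpos : 0 < P1' / (2 * H) := div_pos hpos hH2
  set X := Td * D * P1' / (2 * H * R) with hX
  have hXpos : 0 < X := by
    apply div_pos
    · positivity
    · positivity
  have hX1 : (0:ℝ) < X + 1 := by linarith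
  have hlogpos : 0 < Real.log (X + 1) := Real.log_pos (by linarith)
  have htnpos : 0 < tn := by
    rw [htn]
    exact mul_pos (div_pos hH2 hD) hlogpos
  have hBX : B * (X + 1) = K * (A + C) := by
    rw [hM, hB, hX]
    field_simp
    ring
  have hKtn : K * tn = Real.log (X + 1) := by
    rw [htn, hK]
    field_simp
  have hexp_tn : Real.exp (-K * tn) = (X + 1)⁻¹ := by
    rw [neg_mul, Real.exp_neg, hKtn, Real.exp_log hX1]
  refine ⟨htnpos, ?_, ?_⟩
  · rw [hderiv, hexp_tn, ← hBX]
    field_simp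
    ring
  · intro t ht hne
    rw [hderiv]
    intro h0
    apply hne
    have hMpos : 0 < K * (A + C) := by rw [hM]; positivity
    have hexp_t : Real.exp (-K * t) = B / (K * (A + C)) := by
      rw [eq_div_iff hMpos.ne']
      linear_combination -h0
    have hexp_tn2 : Real.exp (-K * tn) = B / (K * (A + C)) := by
      rw [hexp_tn, ← hBX]
      field_simp
    have h2 := Real.exp_injective (hexp_t.trans hexp_tn2.symm)
    have h3 : -K * t = -K * tn := h2
    exact mul_left_cancel₀ (neg_ne_zero.mpr hKpos.ne') h3
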